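/- Let (X,d) be a Mandelkern locally compact metric space (every closed ball of finite radius in X is compact) and let f_n (n ∈ ℕ⁺) and f be uniform equivalences of X such that f_n orbitally converges to f, f_n⁻¹ orbitally converges to f⁻¹, and f is expansive. Then a point x ∈ X is a topologically stable point of f if and only if for every ε > 0 there exist δ > 0 and m ∈ ℕ⁺ such that δ ∈ Wts(f_n, x, ε) for all n ≥ m (i.e. ⋃_{m≥1} ⋂_{n≥m} Wts(f_n, x, ε) ≠ ∅ for every ε > 0). -/

import Mathlib

open Metric

/-- `g` is a uniform equivalence: both `g` and `g⁻¹` are uniformly continuous. -/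
def IsUniformEquiv {X : Type*} [MetricSpace X] (g : Equiv.Perm X) : Prop :=
  UniformContinuous g ∧ UniformContinuous g.symm

/-- The `C⁰`-distance `D(f,g) = sup_x min(d(f x, g x), 1)`. -/
noncomputable def C0Dist {X : Type*} [MetricSpace X] (f g : X → X) : ℝ :=
  ⨆ x : X, min (dist (f x) (g x)) 1

/-- The closure of the full `g`-orbit of `x`. -/
def OrbitClosure {X : Type*} [MetricSpace X] (g : Equiv.Perm X) (x : X) : Set X :=
  closure (Set.range fun n : ℤ => (g ^ n) x)

/-- `x` is a topologically stable point of `f`. -/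
def IsTopStablePt {X : Type*} [MetricSpace X] (f : Equiv.Perm X) (x : X) : Prop :=
  ∀ ε : ℝ, 0 < ε → ∃ δ : ℝ, 0 < δ ∧
    ∀ g : Equiv.Perm X, IsUniformEquiv g → C0Dist f g < δ →
      ∃ h : OrbitClosure g x → X, Continuous h ∧
        (∀ (y : X) (hy : y ∈ OrbitClosure g x) (hgy : g y ∈ OrbitClosure g x),
          f (h ⟨y, hy⟩) = h ⟨g y, hgy⟩) ∧
        (∀ y : OrbitClosure g x, dist (h y) (y : X) < ε)

/-- `δ ∈ Wts(f, x, ε)`: `δ` witnesses weak topological stability of `f` at `x`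
for tolerance `ε`. -/
def WeakTopStableWitness {X : Type*} [MetricSpace X]
    (f : Equiv.Perm X) (x : X) (ε δ : ℝ) : Prop :=
  ∀ g : Equiv.Perm X, IsUniformEquiv g → C0Dist f g < δ →
    ∃ h : OrbitClosure g x → X, Continuous h ∧
      (∀ (y : OrbitClosure g x) (n : ℤ),
        dist ((f ^ n) (h y)) ((g ^ n) (y : X)) < ε) ∧
      (∀ y : OrbitClosure g x, dist (h y) (y : X) < ε)

lemma C0Dist_nonneg' {X : Type*} [MetricSpace X] (f g : X → X) : 0 ≤ C0Dist f g :=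
  Real.iSup_nonneg fun z => le_min dist_nonneg zero_le_one

lemma C0Dist_lt_add {X : Type*} [MetricSpace X] {f F g : X → X} {a b : ℝ}
    (ha : 0 < a) (hfF : ∀ z, dist (f z) (F z) ≤ a) (hFg : C0Dist F g < b) :
    C0Dist f g < a + b := by
  have hle : C0Dist f g ≤ a + C0Dist F g := by
    apply Real.iSup_le _ (add_nonneg ha.le (C0Dist_nonneg' F g))
    intro z
    have hsup : min (dist (F z) (g z)) 1 ≤ C0Dist F g := by
      apply le_ciSup (f := fun z => min (dist (F z) (g z)) 1)
      exact ⟨1, by rintro _ ⟨w, rfl⟩; exact min_le_right _ _⟩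
    rcases le_total 1 (dist (F z) (g z)) with h1 | h1
    · have := min_le_right (dist (f z) (g z)) 1
      have h2 : min (dist (F z) (g z)) 1 = 1 := min_eq_right h1
      linarith
    · have h2 : min (dist (F z) (g z)) 1 = dist (F z) (g z) := min_eq_left h1
      have h3 := min_le_left (dist (f z) (g z)) 1
      have h4 := dist_triangle (f z) (F z) (g z)
      have h5 := hfF z
      linarith
  linarith [hle, hFg, C0Dist_nonneg' F g]

lemma uc_pow {X : Type*} [MetricSpace X] {g : Equiv.Perm X} (hg : UniformContinuous g) :
    ∀ j : ℕ, UniformContinuous ⇑(g ^ j) := by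
  intro j
  induction j with
  | zero => simpa using uniformContinuous_id
  | succ n ih =>
      have e : ⇑(g ^ (n + 1)) = ⇑(g ^ n) ∘ ⇑g := by
        funext z; simp [pow_succ, Equiv.Perm.mul_apply]
      rw [e]; exact ih.comp hg

lemma uc_zpow {X : Type*} [MetricSpace X] {g : Equiv.Perm X} (hg : IsUniformEquiv g) (k : ℤ) :
    UniformContinuous ⇑(g ^ k) := by
  obtain ⟨j, rfl | rfl⟩ := Int.eq_nat_or_neg k
  · rw [zpow_natCast]; exact uc_pow hg.1 j
  · have e : g ^ (-(j : ℤ)) = g⁻¹ ^ j := by rw [zpow_neg, zpow_natCast, ← inv_pow]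
    rw [e]
    have hgi : UniformContinuous ⇑(g⁻¹) := by
      have := hg.2
      simpa [← Equiv.Perm.inv_def] using this
    exact uc_pow hgi j

lemma zpow_mem_orbitClosure {X : Type*} [MetricSpace X] {g : Equiv.Perm X}
    (hg : IsUniformEquiv g) {x y : X} (hy : y ∈ OrbitClosure g x) (k : ℤ) :
    (g ^ k) y ∈ OrbitClosure g x := by
  have hcont : Continuous ⇑(g ^ k) := (uc_zpow hg k).continuous
  refine map_mem_closure hcont hy ?_
  rintro _ ⟨n, rfl⟩
  exact ⟨k + n, by simp [zpow_add, Equiv.Perm.mul_apply]⟩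

lemma orbit_conj_zpow {X : Type*} [MetricSpace X] {f g : Equiv.Perm X} (hg : IsUniformEquiv g) {x : X}
    (h : OrbitClosure g x → X)
    (hconj : ∀ (y : X) (hy : y ∈ OrbitClosure g x) (hgy : g y ∈ OrbitClosure g x),
      f (h ⟨y, hy⟩) = h ⟨g y, hgy⟩) :
    ∀ (k : ℤ) (y : X) (hy : y ∈ OrbitClosure g x) (h2 : (g ^ k) y ∈ OrbitClosure g x),
      (f ^ k) (h ⟨y, hy⟩) = h ⟨(g ^ k) y, h2⟩ := by
  intro k
  induction k using Int.induction_on with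
  | zero =>
      intro y hy h2
      have e : (f ^ (0 : ℤ)) (h ⟨y, hy⟩) = h ⟨y, hy⟩ := by simp
      rw [e]
      exact congrArg h (Subtype.ext (by simp))
  | succ n ih =>
      intro y hy h2
      have hgy : g y ∈ OrbitClosure g x := by
        simpa using zpow_mem_orbitClosure hg hy 1
      have e1 : f (h ⟨y, hy⟩) = h ⟨g y, hgy⟩ := hconj y hy hgy
      have h3 : (g ^ (n : ℤ)) (g y) ∈ OrbitClosure g x := by
        have e : (g ^ ((n : ℤ) + 1)) y = (g ^ (n : ℤ)) (g y) := by
          rw [zpow_add_one, Equiv.Perm.mul_apply]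
        rw [← e]; exact h2
      have e2 := ih (g y) hgy h3
      have e3 : (f ^ ((n : ℤ) + 1)) (h ⟨y, hy⟩) = (f ^ (n : ℤ)) (f (h ⟨y, hy⟩)) := by
        rw [zpow_add_one, Equiv.Perm.mul_apply]
      have ev : (g ^ ((n : ℤ) + 1)) y = (g ^ (n : ℤ)) (g y) := by
        rw [zpow_add_one, Equiv.Perm.mul_apply]
      rw [e3, e1, e2]
      exact congrArg h (Subtype.ext ev.symm)
  | pred n ih =>
      intro y hy h2
      have hg1 : g⁻¹ y ∈ OrbitClosure g x := by
        simpa using zpow_mem_orbitClosure hg hy (-1)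
      have hgg : g (g⁻¹ y) ∈ OrbitClosure g x := by
        rw [show g (g⁻¹ y) = y from Equiv.apply_symm_apply g y]; exact hy
      have e1 : f (h ⟨g⁻¹ y, hg1⟩) = h ⟨y, hy⟩ := by
        rw [hconj (g⁻¹ y) hg1 hgg]
        exact congrArg h (Subtype.ext (Equiv.apply_symm_apply g y))
      have einv : h ⟨g⁻¹ y, hg1⟩ = f⁻¹ (h ⟨y, hy⟩) := by
        rw [← e1, show f⁻¹ (f (h ⟨g⁻¹ y, hg1⟩)) = h ⟨g⁻¹ y, hg1⟩ from Equiv.symm_apply_apply f _]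
      have h3 : (g ^ (-(n : ℤ))) (g⁻¹ y) ∈ OrbitClosure g x := by
        have e : (g ^ (-(n : ℤ) - 1)) y = (g ^ (-(n : ℤ))) (g⁻¹ y) := by
          rw [zpow_sub_one, Equiv.Perm.mul_apply]
        rw [← e]; exact h2
      have e2 := ih (g⁻¹ y) hg1 h3
      have e3 : (f ^ (-(n : ℤ) - 1)) (h ⟨y, hy⟩) = (f ^ (-(n : ℤ))) (f⁻¹ (h ⟨y, hy⟩)) := by
        rw [zpow_sub_one, Equiv.Perm.mul_apply]
      have ev : (g ^ (-(n : ℤ) - 1)) y = (g ^ (-(n : ℤ))) (g⁻¹ y) := by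
        rw [zpow_sub_one, Equiv.Perm.mul_apply]
      rw [e3, ← einv, e2]
      exact congrArg h (Subtype.ext ev.symm)

lemma dist_zpow_lt {X : Type*} [MetricSpace X] {F f : Equiv.Perm X} {η : ℝ}
    (hpos : ∀ z : X, ∀ j : ℕ, 1 ≤ j → dist ((F ^ j) z) ((f ^ j) z) < η)
    (hneg : ∀ z : X, ∀ j : ℕ, 1 ≤ j → dist ((F⁻¹ ^ j) z) ((f⁻¹ ^ j) z) < η)
    (k : ℤ) (hk : k ≠ 0) (z : X) :
    dist ((F ^ k) z) ((f ^ k) z) < η := by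
  obtain ⟨j, rfl | rfl⟩ := Int.eq_nat_or_neg k
  · have hj : j ≠ 0 := by simpa using hk
    rw [zpow_natCast, zpow_natCast]
    exact hpos z j (Nat.one_le_iff_ne_zero.mpr hj)
  · have hj : j ≠ 0 := by simpa using hk
    have e : ∀ a : Equiv.Perm X, a ^ (-(j : ℤ)) = a⁻¹ ^ j := fun a => by
      rw [zpow_neg, zpow_natCast, ← inv_pow]
    rw [e F, e f]
    exact hneg z j (Nat.one_le_iff_ne_zero.mpr hj)

/-- On a Mandelkern locally compact metric space, for an expansive limit
`f` of uniform equivalences `f_n` with `f_n → f` and `f_n⁻¹ → f⁻¹` orbitally,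
`x` is a topologically stable point of `f` iff for every `ε > 0` the set
`⋃_{m≥1} ⋂_{n≥m} Wts(f_n, x, ε)` is nonempty. -/
theorem topologically_stable_point_iff_of_oc
    {X : Type*} [MetricSpace X]
    (hX : ∀ (x : X) (r : ℝ), IsCompact (closedBall x r))
    (F : ℕ → Equiv.Perm X) (f : Equiv.Perm X)
    (hF : ∀ n, IsUniformEquiv (F n)) (hf : IsUniformEquiv f)
    (hoc : ∀ ε : ℝ, 0 < ε → ∃ N : ℕ, 1 ≤ N ∧ ∀ n, N ≤ n → ∀ x : X, ∀ k : ℕ,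
      1 ≤ k → dist ((F n ^ k) x) ((f ^ k) x) < ε)
    (hoc' : ∀ ε : ℝ, 0 < ε → ∃ N : ℕ, 1 ≤ N ∧ ∀ n, N ≤ n → ∀ x : X, ∀ k : ℕ,
      1 ≤ k → dist (((F n)⁻¹ ^ k) x) ((f⁻¹ ^ k) x) < ε)
    (hexp : ∃ c : ℝ, 0 < c ∧ ∀ x y : X, x ≠ y →
      ∃ n : ℤ, c < dist ((f ^ n) x) ((f ^ n) y))
    (x : X) :
    IsTopStablePt f x ↔
    (∀ ε : ℝ, 0 < ε → ∃ δ : ℝ, 0 < δ ∧ ∃ m : ℕ, 1 ≤ m ∧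
        ∀ n, m ≤ n → WeakTopStableWitness (F n) x ε δ) := by
  obtain ⟨c, hc, hexp'⟩ := hexp
  constructor
  · -- forward direction
    intro hts ε hε
    obtain ⟨δ, hδ, hstab⟩ := hts (ε / 2) (by linarith)
    have hη : (0 : ℝ) < min (δ / 4) (ε / 2) := lt_min (by linarith) (by linarith)
    set η : ℝ := min (δ / 4) (ε / 2) with hη_def
    obtain ⟨N₁, hN₁, hoc₁⟩ := hoc η hη
    obtain ⟨N₂, hN₂, hoc₂⟩ := hoc' η hη
    refine ⟨δ / 2, by linarith, max N₁ N₂, le_trans hN₁ (le_max_left _ _), ?_⟩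
    intro n hn g hgue hgd
    have hN₁n : N₁ ≤ n := le_trans (le_max_left _ _) hn
    have hN₂n : N₂ ≤ n := le_trans (le_max_right _ _) hn
    have hfg : C0Dist ⇑f ⇑g < δ := by
      have hfF : ∀ z : X, dist (f z) ((F n) z) ≤ η := by
        intro z
        have h1 := hoc₁ n hN₁n z 1 le_rfl
        simp only [pow_one] at h1
        rw [dist_comm]; exact h1.le
      have h2 := C0Dist_lt_add hη hfF hgd
      have h3 : η ≤ δ / 4 := min_le_left _ _
      linarith
    obtain ⟨h, hcont, hconj, hclose⟩ := hstab g hgue hfg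
    refine ⟨h, hcont, ?_, fun y => lt_of_lt_of_le (hclose y) (by linarith)⟩
    intro y k
    obtain ⟨yv, hyv⟩ := y
    rcases eq_or_ne k 0 with rfl | hk
    · have h0 : dist (h ⟨yv, hyv⟩) yv < ε / 2 := hclose ⟨yv, hyv⟩
      simpa using lt_of_lt_of_le h0 (by linarith)
    · have hmem := zpow_mem_orbitClosure hgue hyv k
      have hcj := orbit_conj_zpow hgue h hconj k yv hyv hmem
      have h1 : dist ((f ^ k) (h ⟨yv, hyv⟩)) ((g ^ k) yv) < ε / 2 := by
        rw [hcj]; exact hclose ⟨(g ^ k) yv, hmem⟩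
      have h2 : dist ((F n ^ k) (h ⟨yv, hyv⟩)) ((f ^ k) (h ⟨yv, hyv⟩)) < η :=
        dist_zpow_lt (fun z j hj => hoc₁ n hN₁n z j hj)
          (fun z j hj => hoc₂ n hN₂n z j hj) k hk _
      have h3 : η ≤ ε / 2 := min_le_right _ _
      calc dist ((F n ^ k) (h ⟨yv, hyv⟩)) ((g ^ k) yv)
          ≤ dist ((F n ^ k) (h ⟨yv, hyv⟩)) ((f ^ k) (h ⟨yv, hyv⟩))
            + dist ((f ^ k) (h ⟨yv, hyv⟩)) ((g ^ k) yv) := dist_triangle _ _ _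
        _ < ε := by linarith
  · -- backward direction
    intro hw ε hε
    have hmin : (0 : ℝ) < min ε (c / 2) := lt_min hε (by linarith)
    set ε' : ℝ := min ε (c / 2) / 2 with hε'_def
    have hε' : 0 < ε' := by positivity
    have hε'c : ε' ≤ c / 4 := by
      have := min_le_right ε (c / 2); simp only [hε'_def]; linarith
    have hε'ε : ε' ≤ ε / 2 := by
      have := min_le_left ε (c / 2); simp only [hε'_def]; linarith
    obtain ⟨δ, hδ, m, hm, hwts⟩ := hw ε' hε'
    have hη : (0 : ℝ) < min (δ / 4) (c / 4) := lt_min (by linarith) (by linarith)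
    set η : ℝ := min (δ / 4) (c / 4) with hη_def
    obtain ⟨N₁, hN₁, hoc₁⟩ := hoc η hη
    obtain ⟨N₂, hN₂, hoc₂⟩ := hoc' η hη
    set n₀ : ℕ := max m (max N₁ N₂) with hn₀_def
    have hmn₀ : m ≤ n₀ := le_max_left _ _
    have hN₁n₀ : N₁ ≤ n₀ := le_trans (le_max_left _ _) (le_max_right _ _)
    have hN₂n₀ : N₂ ≤ n₀ := le_trans (le_max_right _ _) (le_max_right _ _)
    refine ⟨δ / 2, by linarith, ?_⟩
    intro g hgue hgd
    have hFg : C0Dist ⇑(F n₀) ⇑g < δ := by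
      have hFf : ∀ z : X, dist ((F n₀) z) (f z) ≤ η := by
        intro z
        have h1 := hoc₁ n₀ hN₁n₀ z 1 le_rfl
        simp only [pow_one] at h1
        exact h1.le
      have h2 := C0Dist_lt_add hη hFf hgd
      have h3 : η ≤ δ / 4 := min_le_left _ _
      linarith
    obtain ⟨h, hcont, hkey, hclose⟩ := hwts n₀ hmn₀ g hgue hFg
    have key : ∀ (y : OrbitClosure g x) (k : ℤ),
        dist ((f ^ k) (h y)) ((g ^ k) (y : X)) < c / 2 := by
      intro y k
      rcases eq_or_ne k 0 with rfl | hk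
      · have h0 := hclose y
        simp only [zpow_zero, Equiv.Perm.coe_one, id_eq]
        linarith
      · have h2 : dist ((F n₀ ^ k) (h y)) ((f ^ k) (h y)) < η :=
          dist_zpow_lt (fun z j hj => hoc₁ n₀ hN₁n₀ z j hj)
            (fun z j hj => hoc₂ n₀ hN₂n₀ z j hj) k hk _
        have h1 := hkey y k
        have h3 : η ≤ c / 4 := min_le_right _ _
        calc dist ((f ^ k) (h y)) ((g ^ k) (y : X))
            ≤ dist ((f ^ k) (h y)) ((F n₀ ^ k) (h y))
              + dist ((F n₀ ^ k) (h y)) ((g ^ k) (y : X)) := dist_triangle _ _ _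
          _ = dist ((F n₀ ^ k) (h y)) ((f ^ k) (h y))
              + dist ((F n₀ ^ k) (h y)) ((g ^ k) (y : X)) := by rw [dist_comm]
          _ < c / 2 := by linarith
    refine ⟨h, hcont, ?_, fun y => lt_of_lt_of_le (hclose y) (by linarith)⟩
    intro y hy hgy
    by_contra hne
    obtain ⟨n, hn⟩ := hexp' _ _ hne
    have A : dist ((f ^ (n + 1)) (h ⟨y, hy⟩)) ((g ^ (n + 1)) y) < c / 2 :=
      key ⟨y, hy⟩ (n + 1)
    have B : dist ((f ^ n) (h ⟨g y, hgy⟩)) ((g ^ n) (g y)) < c / 2 :=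
      key ⟨g y, hgy⟩ n
    have eA : (f ^ (n + 1)) (h ⟨y, hy⟩) = (f ^ n) (f (h ⟨y, hy⟩)) := by
      rw [zpow_add_one, Equiv.Perm.mul_apply]
    have eB : (g ^ (n + 1)) y = (g ^ n) (g y) := by
      rw [zpow_add_one, Equiv.Perm.mul_apply]
    rw [eA, eB] at A
    have T : dist ((f ^ n) (f (h ⟨y, hy⟩))) ((f ^ n) (h ⟨g y, hgy⟩))
        ≤ dist ((f ^ n) (f (h ⟨y, hy⟩))) ((g ^ n) (g y))
          + dist ((g ^ n) (g y)) ((f ^ n) (h ⟨g y, hgy⟩)) := dist_triangle _ _ _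
    rw [dist_comm ((g ^ n) (g y))] at T
    linarith
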